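/- Let a, b ∈ ℝ^{d+1} satisfy ⟨a,a⟩ = ⟨b,b⟩ = 1 and ⟨a,b⟩ = 0. Then there exists Λ ∈ G₀ with Λe₀ = a and Λe_d = b if and only if a⁰b^d − a^d b⁰ > 0. Consequently C₁ = {Λ M_{0d} Λ^{−1} : Λ ∈ G₀}. -/

import Mathlib

noncomputable section
open Matrix Complex

namespace AdS

/-- The metric signs: +1 for indices 0 and d, −1 otherwise. -/
def eta (d : ℕ) (μ : Fin (d+1)) : ℝ := if μ = 0 ∨ μ = Fin.last d then 1 else -1

/-- The AdS bilinear form on ℝ^{d+1}. -/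
def formR (d : ℕ) (x y : Fin (d+1) → ℝ) : ℝ := ∑ μ, eta d μ * x μ * y μ

/-- The ℂ-bilinear extension of the AdS form to ℂ^{d+1}. -/
def formC (d : ℕ) (z w : Fin (d+1) → ℂ) : ℂ := ∑ μ, (eta d μ : ℂ) * z μ * w μ

/-- The real AdS quadric. -/
def Xd (d : ℕ) : Set (Fin (d+1) → ℝ) := {x | formR d x x = 1}

/-- The complex AdS quadric. -/
def XdC (d : ℕ) : Set (Fin (d+1) → ℂ) := {z | formC d z z = 1}

/-- ℓ(a∧b) : x ↦ ⟨b,x⟩a − ⟨a,x⟩b as a matrix. -/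
def ell (d : ℕ) (a b : Fin (d+1) → ℝ) : Matrix (Fin (d+1)) (Fin (d+1)) ℝ :=
  Matrix.of fun i j => eta d j * (b j * a i - a j * b i)

/-- The AdS group. -/
def Ggrp (d : ℕ) : Set (Matrix (Fin (d+1)) (Fin (d+1)) ℝ) :=
  {Λ | ∀ x y, formR d (Λ.mulVec x) (Λ.mulVec y) = formR d x y}

/-- The connected component of the identity of the AdS group. -/
def G0 (d : ℕ) : Set (Matrix (Fin (d+1)) (Fin (d+1)) ℝ) :=
  connectedComponentIn (Ggrp d) 1

/-- The set C₁ of Lie algebra generators. -/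
def C1 (d : ℕ) : Set (Matrix (Fin (d+1)) (Fin (d+1)) ℝ) :=
  {M | ∃ a b : Fin (d+1) → ℝ, formR d a a = 1 ∧ formR d b b = 1 ∧ formR d a b = 0 ∧
    0 < a 0 * b (Fin.last d) - a (Fin.last d) * b 0 ∧ M = ell d a b}

/-- The cone C₊ generated by C₁. -/
def Cplus (d : ℕ) : Set (Matrix (Fin (d+1)) (Fin (d+1)) ℝ) :=
  {M | ∃ ρ : ℝ, 0 < ρ ∧ ∃ N ∈ C1 d, M = ρ • N}

/-- A real matrix viewed as a complex one. -/
def toC (d : ℕ) (M : Matrix (Fin (d+1)) (Fin (d+1)) ℝ) : Matrix (Fin (d+1)) (Fin (d+1)) ℂ :=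
  M.map Complex.ofReal

/-- A real vector viewed as a complex one. -/
def toCv (d : ℕ) (x : Fin (d+1) → ℝ) : Fin (d+1) → ℂ := fun μ => (x μ : ℂ)

/-- The generator M₀d = ℓ(e₀ ∧ e_d). -/
def M0d (d : ℕ) : Matrix (Fin (d+1)) (Fin (d+1)) ℝ :=
  ell d (Pi.single 0 1) (Pi.single (Fin.last d) 1)

/-- The future tuboid Z₁₊ of the complex AdS quadric. -/
def Z1plus (d : ℕ) : Set (Fin (d+1) → ℂ) :=
  {z | ∃ M ∈ C1 d, ∃ c ∈ Xd d, ∃ τ : ℂ, 0 < τ.im ∧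
    z = (NormedSpace.exp (τ • toC d M)).mulVec (toCv d c)}

/-- The past tuboid Z₁₋ of the complex AdS quadric. -/
def Z1minus (d : ℕ) : Set (Fin (d+1) → ℂ) :=
  {z | ∃ M ∈ C1 d, ∃ c ∈ Xd d, ∃ τ : ℂ, τ.im < 0 ∧
    z = (NormedSpace.exp (τ • toC d M)).mulVec (toCv d c)}

/-! ### Auxiliary lemmas -/

section Aux
variable {d : ℕ}

lemma eta_zero : eta d 0 = 1 := by simp [eta]

lemma eta_last : eta d (Fin.last d) = 1 := by simp [eta]

lemma eta_sq (μ : Fin (d+1)) : eta d μ * eta d μ = 1 := by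
  unfold eta; split <;> norm_num

lemma formR_symm (x y : Fin (d+1) → ℝ) : formR d x y = formR d y x := by
  unfold formR; apply Finset.sum_congr rfl; intros; ring

lemma formR_add_left (x y z : Fin (d+1) → ℝ) :
    formR d (x + y) z = formR d x z + formR d y z := by
  unfold formR; rw [← Finset.sum_add_distrib]
  apply Finset.sum_congr rfl; intros; simp [Pi.add_apply]; ring

lemma formR_smul_left (c : ℝ) (x y : Fin (d+1) → ℝ) :
    formR d (c • x) y = c * formR d x y := by
  unfold formR; rw [Finset.mul_sum]
  apply Finset.sum_congr rfl; intros; simp [Pi.smul_apply]; ring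

lemma formR_add_right (x y z : Fin (d+1) → ℝ) :
    formR d x (y + z) = formR d x y + formR d x z := by
  rw [formR_symm, formR_add_left, formR_symm z x, formR_symm y x]

lemma formR_smul_right (c : ℝ) (x y : Fin (d+1) → ℝ) :
    formR d x (c • y) = c * formR d x y := by
  rw [formR_symm, formR_smul_left, formR_symm y x]

lemma formR_single_left (i : Fin (d+1)) (y : Fin (d+1) → ℝ) :
    formR d (Pi.single i 1) y = eta d i * y i := by
  unfold formR
  rw [Finset.sum_eq_single i]
  · simp
  · intro b _ hb; simp [Pi.single_eq_of_ne hb]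
  · simp

/-- The metric as a diagonal matrix. -/
def etaM (d : ℕ) : Matrix (Fin (d+1)) (Fin (d+1)) ℝ := Matrix.diagonal (eta d)

lemma etaM_mul_self : etaM d * etaM d = 1 := by
  unfold etaM
  rw [Matrix.diagonal_mul_diagonal]
  convert Matrix.diagonal_one with μ
  exact eta_sq μ

lemma formR_eq_dot (x y : Fin (d+1) → ℝ) : formR d x y = x ⬝ᵥ (etaM d).mulVec y := by
  unfold formR etaM dotProduct
  apply Finset.sum_congr rfl
  intro μ _
  rw [Matrix.mulVec_diagonal]
  ring

end Aux

section Grp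
variable {d : ℕ}

lemma mem_Ggrp_iff {Λ : Matrix (Fin (d+1)) (Fin (d+1)) ℝ} :
    Λ ∈ Ggrp d ↔ Λᵀ * etaM d * Λ = etaM d := by
  have key : ∀ (x y : Fin (d+1) → ℝ),
      formR d (Λ.mulVec x) (Λ.mulVec y) = x ⬝ᵥ (Λᵀ * etaM d * Λ).mulVec y := by
    intro x y
    rw [formR_eq_dot, Matrix.mulVec_mulVec, Matrix.dotProduct_mulVec,
      ← Matrix.vecMul_transpose, Matrix.vecMul_vecMul, ← Matrix.dotProduct_mulVec,
      ← Matrix.mul_assoc]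
  constructor
  · intro h
    apply Matrix.ext
    intro i j
    have := (key (Pi.single i 1) (Pi.single j 1)).symm.trans
      ((h (Pi.single i 1) (Pi.single j 1)).trans (formR_eq_dot _ _))
    simpa [Matrix.mulVec_single, dotProduct, Pi.single_apply, ite_mul,
      Finset.sum_ite_eq] using this
  · intro h x y
    rw [key, h, formR_eq_dot]

lemma Ggrp_one : (1 : Matrix (Fin (d+1)) (Fin (d+1)) ℝ) ∈ Ggrp d := by
  intro x y; rw [Matrix.one_mulVec, Matrix.one_mulVec]

lemma Ggrp_mul {A B : Matrix (Fin (d+1)) (Fin (d+1)) ℝ}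
    (hA : A ∈ Ggrp d) (hB : B ∈ Ggrp d) : A * B ∈ Ggrp d := by
  intro x y
  rw [← Matrix.mulVec_mulVec, ← Matrix.mulVec_mulVec, hA, hB]

lemma etaM_transpose : (etaM d)ᵀ = etaM d := Matrix.diagonal_transpose _

lemma etaM_cancel (X : Matrix (Fin (d+1)) (Fin (d+1)) ℝ) :
    etaM d * (etaM d * X) = X := by rw [← Matrix.mul_assoc, etaM_mul_self, one_mul]

/-- explicit inverse -/
def ginv (d : ℕ) (Λ : Matrix (Fin (d+1)) (Fin (d+1)) ℝ) : Matrix (Fin (d+1)) (Fin (d+1)) ℝ :=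
  etaM d * Λᵀ * etaM d

lemma ginv_mul {Λ : Matrix (Fin (d+1)) (Fin (d+1)) ℝ} (h : Λ ∈ Ggrp d) :
    ginv d Λ * Λ = 1 := by
  have := mem_Ggrp_iff.mp h
  calc ginv d Λ * Λ = etaM d * (Λᵀ * etaM d * Λ) := by
        unfold ginv; noncomm_ring
    _ = 1 := by rw [this, etaM_mul_self]

lemma mul_ginv {Λ : Matrix (Fin (d+1)) (Fin (d+1)) ℝ} (h : Λ ∈ Ggrp d) :
    Λ * ginv d Λ = 1 := mul_eq_one_comm.mp (ginv_mul h)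

lemma ginv_mem_Ggrp {Λ : Matrix (Fin (d+1)) (Fin (d+1)) ℝ} (h : Λ ∈ Ggrp d) :
    ginv d Λ ∈ Ggrp d := by
  rw [mem_Ggrp_iff]
  have h1 : Λ * (etaM d * (Λᵀ * etaM d)) = 1 := by
    simpa [ginv, Matrix.mul_assoc] using mul_ginv h
  simp only [ginv, Matrix.transpose_mul, Matrix.transpose_transpose, etaM_transpose,
    Matrix.mul_assoc]
  rw [etaM_cancel, h1, mul_one]

lemma inv_eq_ginv {Λ : Matrix (Fin (d+1)) (Fin (d+1)) ℝ} (h : Λ ∈ Ggrp d) :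
    Λ⁻¹ = ginv d Λ := Matrix.inv_eq_left_inv (ginv_mul h)

end Grp

section G0sec
variable {d : ℕ}

lemma G0_subset_Ggrp : G0 d ⊆ Ggrp d := connectedComponentIn_subset _ _

lemma one_mem_G0 : (1 : Matrix (Fin (d+1)) (Fin (d+1)) ℝ) ∈ G0 d :=
  mem_connectedComponentIn Ggrp_one

lemma G0_preconnected : IsPreconnected (G0 d) := isPreconnected_connectedComponentIn

lemma subset_G0 {s : Set (Matrix (Fin (d+1)) (Fin (d+1)) ℝ)}
    (hs : IsPreconnected s) (h1 : ∃ A ∈ s, A ∈ G0 d) (hsub : s ⊆ Ggrp d) : s ⊆ G0 d := by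
  obtain ⟨A, hAs, hAG⟩ := h1
  have := hs.subset_connectedComponentIn hAs hsub
  rwa [← connectedComponentIn_eq (F := Ggrp d) (x := 1) hAG] at this

lemma G0_mul {A B : Matrix (Fin (d+1)) (Fin (d+1)) ℝ}
    (hA : A ∈ G0 d) (hB : B ∈ G0 d) : A * B ∈ G0 d := by
  have hc : Continuous fun X : Matrix (Fin (d+1)) (Fin (d+1)) ℝ => A * X :=
    continuous_const.matrix_mul continuous_id
  refine subset_G0 ((G0_preconnected).image _ hc.continuousOn) ⟨A, ⟨1, one_mem_G0, mul_one A⟩, hA⟩ ?_ ⟨B, hB, rfl⟩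
  rintro _ ⟨X, hX, rfl⟩
  exact Ggrp_mul (G0_subset_Ggrp hA) (G0_subset_Ggrp hX)

lemma G0_ginv {A : Matrix (Fin (d+1)) (Fin (d+1)) ℝ} (hA : A ∈ G0 d) : ginv d A ∈ G0 d := by
  have hc : Continuous fun X : Matrix (Fin (d+1)) (Fin (d+1)) ℝ => ginv d X := by
    unfold ginv
    exact (continuous_const.matrix_mul continuous_id.matrix_transpose).matrix_mul continuous_const
  refine subset_G0 ((G0_preconnected).image _ hc.continuousOn) ⟨1, ⟨1, one_mem_G0, ?_⟩, one_mem_G0⟩ ?_ ⟨A, hA, rfl⟩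
  · unfold ginv; simp [etaM_mul_self]
  · rintro _ ⟨X, hX, rfl⟩
    exact ginv_mem_Ggrp (G0_subset_Ggrp hX)

lemma G0_of_path (γ : ℝ → Matrix (Fin (d+1)) (Fin (d+1)) ℝ) (hc : Continuous γ)
    (hmem : ∀ t, γ t ∈ Ggrp d) (h0 : γ 0 = 1) (t : ℝ) : γ t ∈ G0 d := by
  have himg : γ '' Set.univ ⊆ G0 d := by
    refine subset_G0 (isPreconnected_univ.image γ hc.continuousOn) ⟨1, ⟨0, trivial, h0⟩, one_mem_G0⟩ ?_
    rintro _ ⟨u, -, rfl⟩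
    exact hmem u
  exact himg ⟨t, trivial, rfl⟩

end G0sec

section NonVanish
variable {d : ℕ}

/-- spatial indices -/
def Sfin (d : ℕ) : Finset (Fin (d+1)) := (Finset.univ.erase 0).erase (Fin.last d)

lemma zero_ne_last (hd : 1 ≤ d) : (0 : Fin (d+1)) ≠ Fin.last d := by
  intro h
  have := congrArg Fin.val h
  simp [Fin.last] at this
  omega

lemma mem_Sfin {μ : Fin (d+1)} : μ ∈ Sfin d ↔ μ ≠ Fin.last d ∧ μ ≠ 0 := by
  simp [Sfin, Finset.mem_erase]

lemma eta_spatial {μ : Fin (d+1)} (h : μ ∈ Sfin d) : eta d μ = -1 := by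
  rw [mem_Sfin] at h
  unfold eta
  rw [if_neg]
  push_neg
  exact ⟨h.2, h.1⟩

lemma sum_split (hd : 1 ≤ d) (f : Fin (d+1) → ℝ) :
    ∑ μ, f μ = f 0 + f (Fin.last d) + ∑ μ ∈ Sfin d, f μ := by
  rw [← Finset.add_sum_erase _ f (Finset.mem_univ 0),
    ← Finset.add_sum_erase _ f (Finset.mem_erase.mpr ⟨(zero_ne_last hd).symm, Finset.mem_univ _⟩)]
  ring_nf
  rfl

lemma formR_split (hd : 1 ≤ d) (x y : Fin (d+1) → ℝ) :
    formR d x y = x 0 * y 0 + x (Fin.last d) * y (Fin.last d) - ∑ μ ∈ Sfin d, x μ * y μ := by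
  unfold formR
  rw [sum_split hd, eta_zero, eta_last]
  have : ∑ μ ∈ Sfin d, eta d μ * x μ * y μ = -∑ μ ∈ Sfin d, x μ * y μ := by
    rw [← Finset.sum_neg_distrib]
    exact Finset.sum_congr rfl fun μ hμ => by rw [eta_spatial hμ]; ring
  rw [this]; ring

lemma detD_ne_zero (hd : 1 ≤ d) {a b : Fin (d+1) → ℝ}
    (haa : formR d a a = 1) (hbb : formR d b b = 1) (hab : formR d a b = 0) :
    a 0 * b (Fin.last d) - a (Fin.last d) * b 0 ≠ 0 := by
  intro hD
  rw [formR_split hd] at haa hbb hab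
  have hC : (∑ μ ∈ Sfin d, a μ * b μ)^2 ≤
      (∑ μ ∈ Sfin d, a μ * a μ) * ∑ μ ∈ Sfin d, b μ * b μ := by
    have := Finset.sum_mul_sq_le_sq_mul_sq (Sfin d) a b
    calc (∑ μ ∈ Sfin d, a μ * b μ)^2 ≤ (∑ μ ∈ Sfin d, a μ ^2) * ∑ μ ∈ Sfin d, b μ ^2 := this
      _ = _ := by congr 1 <;> exact Finset.sum_congr rfl fun μ _ => (sq _)
  have hA : (0:ℝ) ≤ ∑ μ ∈ Sfin d, a μ * a μ := Finset.sum_nonneg fun μ _ => mul_self_nonneg _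
  have hB : (0:ℝ) ≤ ∑ μ ∈ Sfin d, b μ * b μ := Finset.sum_nonneg fun μ _ => mul_self_nonneg _
  set A := ∑ μ ∈ Sfin d, a μ * a μ with hA'
  set B := ∑ μ ∈ Sfin d, b μ * b μ with hB'
  set S2 := ∑ μ ∈ Sfin d, a μ * b μ with hS2'
  have e1 : S2 = a 0 * b 0 + a (Fin.last d) * b (Fin.last d) := by linarith
  have e2 : 1 + A = a 0 * a 0 + a (Fin.last d) * a (Fin.last d) := by linarith
  have e3 : 1 + B = b 0 * b 0 + b (Fin.last d) * b (Fin.last d) := by linarith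
  have key : S2^2 = (1+A)*(1+B) := by
    rw [e1, e2, e3]
    linear_combination (-(a 0 * b (Fin.last d) - a (Fin.last d) * b 0)) * hD
  nlinarith [key, hC, hA, hB]

lemma continuous_mulVec_apply (v : Fin (d+1) → ℝ) (i : Fin (d+1)) :
    Continuous fun X : Matrix (Fin (d+1)) (Fin (d+1)) ℝ => X.mulVec v i := by
  have : (fun X : Matrix (Fin (d+1)) (Fin (d+1)) ℝ => X.mulVec v i) =
      fun X => ∑ j, X i j * v j := rfl
  rw [this]
  exact continuous_finset_sum _ fun j _ =>
    (continuous_id.matrix_elem i j).mul continuous_const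

lemma D_pos_G0 (hd : 1 ≤ d) {a b : Fin (d+1) → ℝ}
    (haa : formR d a a = 1) (hbb : formR d b b = 1) (hab : formR d a b = 0)
    (hpos : 0 < a 0 * b (Fin.last d) - a (Fin.last d) * b 0)
    {Λ : Matrix (Fin (d+1)) (Fin (d+1)) ℝ} (hΛ : Λ ∈ G0 d) :
    0 < (Λ.mulVec a) 0 * (Λ.mulVec b) (Fin.last d)
      - (Λ.mulVec a) (Fin.last d) * (Λ.mulVec b) 0 := by
  set f : Matrix (Fin (d+1)) (Fin (d+1)) ℝ → ℝ := fun X =>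
    (X.mulVec a) 0 * (X.mulVec b) (Fin.last d) - (X.mulVec a) (Fin.last d) * (X.mulVec b) 0 with hf
  have hcont : Continuous f := by
    apply Continuous.sub
    · exact (continuous_mulVec_apply a 0).mul (continuous_mulVec_apply b _)
    · exact (continuous_mulVec_apply a _).mul (continuous_mulVec_apply b 0)
  have hS : IsPreconnected (f '' G0 d) := G0_preconnected.image f hcont.continuousOn
  have hne : ∀ y ∈ f '' G0 d, y ≠ 0 := by
    rintro _ ⟨X, hX, rfl⟩
    have hG := G0_subset_Ggrp hX
    exact detD_ne_zero hd (by rw [hG a a, haa]) (by rw [hG b b, hbb]) (by rw [hG a b, hab])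
  have h1 : f 1 ∈ f '' G0 d := ⟨1, one_mem_G0, rfl⟩
  have hf1 : f 1 = a 0 * b (Fin.last d) - a (Fin.last d) * b 0 := by
    simp [hf, Matrix.one_mulVec]
  by_contra hle
  push_neg at hle
  have hlt : f Λ < 0 := lt_of_le_of_ne hle (hne _ ⟨Λ, hΛ, rfl⟩)
  have : (0:ℝ) ∈ f '' G0 d := by
    apply hS.Icc_subset ⟨Λ, hΛ, rfl⟩ h1
    constructor
    · exact le_of_lt hlt
    · rw [hf1]; exact le_of_lt hpos
  exact hne 0 this rfl

end NonVanish

section PlaneMap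
variable {d : ℕ}

/-- Generalized rotation (ε = 1) / boost (ε = −1) in the plane spanned by `v, w`,
with `⟨v,v⟩ = 1`, `⟨w,w⟩ = ε`, `⟨v,w⟩ = 0` and `c² + ε σ² = 1`. -/
def pm (d : ℕ) (v w : Fin (d+1) → ℝ) (ε c σ : ℝ) : Matrix (Fin (d+1)) (Fin (d+1)) ℝ :=
  Matrix.of fun i j =>
    (if i = j then (1:ℝ) else 0)
    + v i * ((c-1) * (eta d j * v j) - σ * (ε * (eta d j * w j)))
    + w i * ((c-1) * (ε * (eta d j * w j)) + ε * σ * (eta d j * v j))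

lemma pm_mulVec (v w : Fin (d+1) → ℝ) (ε c σ : ℝ) (x : Fin (d+1) → ℝ) :
    (pm d v w ε c σ).mulVec x =
      x + ((c-1) * formR d v x - σ * (ε * formR d w x)) • v
        + ((c-1) * (ε * formR d w x) + ε * σ * formR d v x) • w := by
  funext i
  have key : ∀ p q : ℝ, ∑ j, ((p * (eta d j * v j) + q * (eta d j * w j)) * x j)
      = p * formR d v x + q * formR d w x := by
    intro p q
    unfold formR
    rw [Finset.mul_sum, Finset.mul_sum, ← Finset.sum_add_distrib]
    apply Finset.sum_congr rfl; intros; ring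
  have expand : ∀ j, pm d v w ε c σ i j * x j = (if i = j then (1:ℝ) else 0) * x j
      + ((v i * (c-1) + w i * (ε * σ)) * (eta d j * v j)
         + (w i * ((c-1) * ε) - v i * (σ * ε)) * (eta d j * w j)) * x j := by
    intro j; unfold pm; simp only [Matrix.of_apply]; ring
  show ∑ j, pm d v w ε c σ i j * x j = _
  rw [Finset.sum_congr rfl (fun j _ => expand j), Finset.sum_add_distrib, key]
  simp only [ite_mul, one_mul, zero_mul, Finset.sum_ite_eq, Finset.mem_univ, if_true,
    Pi.add_apply, Pi.smul_apply, smul_eq_mul]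
  ring

lemma pm_mem_Ggrp {v w : Fin (d+1) → ℝ} {ε c σ : ℝ}
    (hv : formR d v v = 1) (hw : formR d w w = ε) (hvw : formR d v w = 0)
    (hε : ε * ε = 1) (hcσ : c^2 + ε * σ^2 = 1) :
    pm d v w ε c σ ∈ Ggrp d := by
  intro x y
  rw [pm_mulVec, pm_mulVec]
  simp only [formR_add_left, formR_add_right, formR_smul_left, formR_smul_right,
    hv, hw, hvw, formR_symm w v, formR_symm v x, formR_symm w x, formR_symm v y,
    formR_symm w y]
  set t1 := formR d x v
  set s1 := formR d x w
  set t2 := formR d y v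
  set s2 := formR d y w
  linear_combination (t1*t2 + ε*s1*s2) * hcσ
    + (ε*σ^2*t1*t2 + ε*(c-1)^2*s1*s2 + ε*σ*(c-1)*(t1*s2+s1*t2)) * hε

lemma pm_one (v w : Fin (d+1) → ℝ) (ε : ℝ) : pm d v w ε 1 0 = 1 := by
  apply Matrix.ext
  intro i j
  unfold pm
  simp [Matrix.one_apply]

lemma pm_continuous (v w : Fin (d+1) → ℝ) (ε : ℝ) {f g : ℝ → ℝ}
    (hf : Continuous f) (hg : Continuous g) :
    Continuous fun τ => pm d v w ε (f τ) (g τ) := by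
  apply continuous_pi; intro i; apply continuous_pi; intro j
  show Continuous fun τ => pm d v w ε (f τ) (g τ) i j
  unfold pm
  simp only [Matrix.of_apply]
  fun_prop

lemma pm_rot_mem_G0 {v w : Fin (d+1) → ℝ}
    (hv : formR d v v = 1) (hw : formR d w w = 1) (hvw : formR d v w = 0)
    {c σ : ℝ} (hcσ : c^2 + σ^2 = 1) : pm d v w 1 c σ ∈ G0 d := by
  have hσ : |σ| ≤ 1 := by nlinarith [abs_nonneg σ, _root_.sq_abs σ]
  obtain ⟨θ, hθc, hθs⟩ : ∃ θ, Real.cos θ = c ∧ Real.sin θ = σ := by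
    rcases le_or_gt 0 c with hc | hc
    · refine ⟨Real.arcsin σ, ?_, Real.sin_arcsin (by linarith [abs_le.mp hσ]) (by linarith [abs_le.mp hσ])⟩
      rw [Real.cos_arcsin]
      rw [show 1 - σ^2 = c^2 by linarith]
      exact Real.sqrt_sq hc
    · refine ⟨Real.pi - Real.arcsin σ, ?_, by
        rw [Real.sin_pi_sub]
        exact Real.sin_arcsin (by linarith [abs_le.mp hσ]) (by linarith [abs_le.mp hσ])⟩
      rw [Real.cos_pi_sub, Real.cos_arcsin]
      rw [show 1 - σ^2 = c^2 by linarith]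
      rw [Real.sqrt_sq_eq_abs, abs_of_neg hc]
      ring
  have := G0_of_path (fun τ => pm d v w 1 (Real.cos (τ * θ)) (Real.sin (τ * θ)))
    (pm_continuous v w 1 (by fun_prop) (by fun_prop))
    (fun t => pm_mem_Ggrp hv hw hvw (by norm_num)
      (by rw [one_mul]; exact Real.cos_sq_add_sin_sq _))
    (by simp [pm_one]) 1
  simpa [hθc, hθs] using this

lemma pm_boost_mem_G0 {v w : Fin (d+1) → ℝ}
    (hv : formR d v v = 1) (hw : formR d w w = -1) (hvw : formR d v w = 0)
    {c σ : ℝ} (hcσ : c^2 - σ^2 = 1) (hc : 0 < c) : pm d v w (-1) c σ ∈ G0 d := by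
  have hcc : c = Real.cosh (Real.arsinh σ) := by
    rw [Real.cosh_arsinh]
    rw [show 1 + σ^2 = c^2 by linarith]
    exact (Real.sqrt_sq hc.le).symm
  set t := Real.arsinh σ
  have := G0_of_path (fun τ => pm d v w (-1) (Real.cosh (τ * t)) (Real.sinh (τ * t)))
    (pm_continuous v w (-1) (by fun_prop) (by fun_prop))
    (fun u => pm_mem_Ggrp hv hw hvw (by norm_num)
      (by rw [show (-1 : ℝ) * Real.sinh (u*t)^2 = -(Real.sinh (u*t)^2) by ring]
          rw [← sub_eq_add_neg]
          exact Real.cosh_sq_sub_sinh_sq _))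
    (by simp [pm_one]) 1
  simp only [one_mul] at this
  rw [hcc, ← Real.sinh_arsinh σ]
  exact this

end PlaneMap

section Construct
variable {d : ℕ}

/-- spatial projection -/
def Qv (d : ℕ) (x : Fin (d+1) → ℝ) : Fin (d+1) → ℝ :=
  fun μ => if μ = 0 ∨ μ = Fin.last d then 0 else x μ

lemma Qv_spatial {x : Fin (d+1) → ℝ} {μ : Fin (d+1)} (h : μ ∈ Sfin d) : Qv d x μ = x μ := by
  rw [mem_Sfin] at h
  exact if_neg (by push_neg; exact ⟨h.2, h.1⟩)

lemma Qv_notSpatial {x : Fin (d+1) → ℝ} {μ : Fin (d+1)} (h : μ = 0 ∨ μ = Fin.last d) :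
    Qv d x μ = 0 := if_pos h

lemma formR_Qv_left (hd : 1 ≤ d) (x y : Fin (d+1) → ℝ) :
    formR d (Qv d x) y = -∑ μ ∈ Sfin d, x μ * y μ := by
  rw [formR_split hd, Qv_notSpatial (Or.inl rfl), Qv_notSpatial (Or.inr rfl)]
  rw [Finset.sum_congr rfl fun μ hμ => by rw [Qv_spatial hμ]]
  ring

/-- Step 2/3: reduce a unit vector supported suitably to a basis vector. -/
lemma reduce_step (hd : 1 ≤ d) {k k' : Fin (d+1)}
    (hk : k = 0 ∨ k = Fin.last d) (hk' : k' = 0 ∨ k' = Fin.last d) (hne : k ≠ k')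
    {x : Fin (d+1) → ℝ} (hxx : formR d x x = 1) (hx' : x k' = 0) (hxk : 0 < x k) :
    ∃ g ∈ G0 d, g.mulVec x = Pi.single k 1 ∧
      g.mulVec (Pi.single k' 1) = Pi.single k' 1 := by
  have h0l := zero_ne_last hd
  have hsp : ∀ μ ∈ Sfin d, μ ≠ k ∧ μ ≠ k' := by
    intro μ hμ
    rw [mem_Sfin] at hμ
    constructor
    · rcases hk with rfl | rfl
      exacts [hμ.2, hμ.1]
    · rcases hk' with rfl | rfl
      exacts [hμ.2, hμ.1]
  have hetak : eta d k = 1 := by rcases hk with rfl | rfl; exacts [eta_zero, eta_last]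
  set N2 := ∑ μ ∈ Sfin d, x μ * x μ with hN2
  have hN2nonneg : 0 ≤ N2 := Finset.sum_nonneg fun μ _ => mul_self_nonneg _
  have hxk2 : x k * x k = 1 + N2 := by
    rw [formR_split hd] at hxx
    have : x 0 * x 0 + x (Fin.last d) * x (Fin.last d) = x k * x k := by
      rcases hk with rfl | rfl <;> rcases hk' with rfl | rfl <;>
        first | exact absurd rfl hne | (rw [hx']; ring)
    linarith
  rcases eq_or_lt_of_le hN2nonneg with hN20 | hN2pos
  · -- trivial case : x is already the basis vector
    refine ⟨1, one_mem_G0, ?_, by rw [Matrix.one_mulVec]⟩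
    rw [Matrix.one_mulVec]
    have hxk1 : x k = 1 := by nlinarith
    have hzero : ∀ μ ∈ Sfin d, x μ = 0 := by
      intro μ hμ
      have := (Finset.sum_eq_zero_iff_of_nonneg
        (fun μ _ => mul_self_nonneg (x μ))).mp hN20.symm μ hμ
      nlinarith [this]
    funext μ
    rw [Pi.single_apply]
    by_cases hμk : μ = k
    · rw [if_pos hμk, hμk, hxk1]
    · rw [if_neg hμk]
      by_cases hμk' : μ = k'
      · rw [hμk', hx']
      · refine hzero μ (mem_Sfin.mpr ?_)
        constructor
        · rcases hk with rfl | rfl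
          · rcases hk' with rfl | rfl
            exacts [absurd rfl hne, hμk']
          · exact hμk
        · rcases hk with rfl | rfl
          · exact hμk
          · rcases hk' with rfl | rfl
            exacts [hμk', absurd rfl hne]
  · -- main case: boost
    set n := Real.sqrt N2 with hn
    have hnpos : 0 < n := Real.sqrt_pos.mpr hN2pos
    have hnsq : n * n = N2 := Real.mul_self_sqrt hN2nonneg
    set v : Fin (d+1) → ℝ := Pi.single k 1 with hv
    set u : Fin (d+1) → ℝ := n⁻¹ • Qv d x with hu
    have hu0 : ∀ μ, μ = 0 ∨ μ = Fin.last d → u μ = 0 := by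
      intro μ hμ
      rw [hu, Pi.smul_apply, Qv_notSpatial hμ, smul_zero]
    have huu : formR d u u = -1 := by
      rw [hu, formR_smul_left, formR_smul_right, formR_Qv_left hd]
      rw [Finset.sum_congr rfl fun μ hμ => by rw [Qv_spatial hμ]]
      rw [← hN2, ← hnsq]
      field_simp
    have hvu : formR d v u = 0 := by
      rw [hv, formR_single_left, hu0 k hk, mul_zero]
    have hvv : formR d v v = 1 := by
      rw [hv, formR_single_left, hetak, Pi.single_eq_same, one_mul]
    set g := pm d v u (-1) (x k) n with hg
    have hgG0 : g ∈ G0 d :=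
      pm_boost_mem_G0 hvv huu hvu (by nlinarith) hxk
    have ht : formR d v x = x k := by
      rw [hv, formR_single_left, hetak, one_mul]
    have hs : formR d u x = -n := by
      rw [hu, formR_smul_left, formR_Qv_left hd, ← hN2, ← hnsq]
      field_simp
    refine ⟨g, hgG0, ?_, ?_⟩
    · rw [hg, pm_mulVec, ht, hs]
      funext μ
      simp only [Pi.add_apply, Pi.smul_apply, smul_eq_mul]
      by_cases hμk : μ = k
      · subst hμk
        rw [hu0 μ hk, hv, Pi.single_eq_same]
        linear_combination hxk2 - hnsq
      · rw [hv, Pi.single_apply, if_neg hμk]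
        by_cases hμk' : μ = k'
        · subst hμk'
          rw [hu0 μ hk', hx']
          ring
        · have hμsp : μ ∈ Sfin d := by
            rw [mem_Sfin]
            constructor
            · rcases hk with rfl | rfl
              · rcases hk' with rfl | rfl
                exacts [absurd rfl hne, hμk']
              · exact hμk
            · rcases hk with rfl | rfl
              · exact hμk
              · rcases hk' with rfl | rfl
                exacts [hμk', absurd rfl hne]
          rw [hu, Pi.smul_apply, Qv_spatial hμsp, smul_eq_mul]
          field_simp
          ring
    · rw [hg, pm_mulVec]
      have ht' : formR d v (Pi.single k' 1) = 0 := by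
        rw [hv, formR_single_left, hetak, one_mul, Pi.single_apply, if_neg hne]
      have hs' : formR d u (Pi.single k' 1) = 0 := by
        rw [hu, formR_smul_left, formR_Qv_left hd]
        rw [Finset.sum_congr rfl fun μ hμ => by
          rw [Pi.single_apply, if_neg (hsp μ hμ).2, mul_zero]]
        simp
      rw [ht', hs']
      ring_nf
      simp
/-- Step 1: rotate in the (0,d) plane so that the image of `a` has positive 0-component
and vanishing last component. -/
lemma rotate_step (hd : 1 ≤ d) {a : Fin (d+1) → ℝ} (haa : formR d a a = 1) :
    ∃ g ∈ G0 d, (g.mulVec a) (Fin.last d) = 0 ∧ 0 < (g.mulVec a) 0 := by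
  have h0l := zero_ne_last hd
  set v : Fin (d+1) → ℝ := Pi.single 0 1 with hv
  set w : Fin (d+1) → ℝ := Pi.single (Fin.last d) 1 with hw
  have hv0 : v 0 = 1 := by rw [hv]; exact Pi.single_eq_same 0 1
  have hvl : v (Fin.last d) = 0 := by rw [hv, Pi.single_apply, if_neg (Ne.symm h0l)]
  have hw0 : w 0 = 0 := by rw [hw, Pi.single_apply, if_neg h0l]
  have hwl : w (Fin.last d) = 1 := by rw [hw]; exact Pi.single_eq_same _ 1
  have hvv : formR d v v = 1 := by
    rw [hv, formR_single_left, eta_zero, one_mul]; exact Pi.single_eq_same 0 1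
  have hww : formR d w w = 1 := by
    rw [hw, formR_single_left, eta_last, one_mul]; exact Pi.single_eq_same _ 1
  have hvw : formR d v w = 0 := by
    rw [hv, formR_single_left, eta_zero, one_mul]; exact hw0
  have hfv : formR d v a = a 0 := by rw [hv, formR_single_left, eta_zero, one_mul]
  have hfw : formR d w a = a (Fin.last d) := by rw [hw, formR_single_left, eta_last, one_mul]
  have hr2 : 0 < a 0 * a 0 + a (Fin.last d) * a (Fin.last d) := by
    rw [formR_split hd] at haa
    have : (0:ℝ) ≤ ∑ μ ∈ Sfin d, a μ * a μ := Finset.sum_nonneg fun μ _ => mul_self_nonneg _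
    linarith
  set r : ℝ := Real.sqrt (a 0 * a 0 + a (Fin.last d) * a (Fin.last d)) with hr
  have hrpos : 0 < r := Real.sqrt_pos.mpr hr2
  have hr0 : r ≠ 0 := ne_of_gt hrpos
  have hrsq : r * r = a 0 * a 0 + a (Fin.last d) * a (Fin.last d) :=
    Real.mul_self_sqrt hr2.le
  set c : ℝ := a 0 / r with hc
  set σ : ℝ := -(a (Fin.last d)) / r with hσ
  have hcσ : c^2 + σ^2 = 1 := by
    rw [hc, hσ, div_pow, div_pow, ← add_div, div_eq_one_iff_eq (pow_ne_zero 2 hr0)]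
    linear_combination -hrsq
  refine ⟨pm d v w 1 c σ, pm_rot_mem_G0 hvv hww hvw hcσ, ?_, ?_⟩
  · rw [pm_mulVec, hfv, hfw]
    simp only [Pi.add_apply, Pi.smul_apply, smul_eq_mul]
    rw [hvl, hwl, mul_zero, mul_one, add_zero]
    rw [show a (Fin.last d) + ((c - 1) * (1 * a (Fin.last d)) + 1 * σ * a 0)
      = c * a (Fin.last d) + σ * a 0 from by ring]
    rw [hc, hσ, div_mul_eq_mul_div, div_mul_eq_mul_div, ← add_div,
      div_eq_zero_iff]
    left; ring
  · rw [pm_mulVec, hfv, hfw]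
    simp only [Pi.add_apply, Pi.smul_apply, smul_eq_mul]
    rw [hv0, hw0, mul_one, mul_zero, add_zero]
    have key : a 0 + ((c - 1) * a 0 - σ * (1 * a (Fin.last d))) = r := by
      rw [show a 0 + ((c - 1) * a 0 - σ * (1 * a (Fin.last d)))
        = c * a 0 - σ * a (Fin.last d) from by ring]
      rw [hc, hσ, div_mul_eq_mul_div, div_mul_eq_mul_div, div_sub_div_same,
        div_eq_iff hr0]
      linear_combination -hrsq
    rw [key]
    exact hrpos

/-- Main construction: every positively-oriented orthonormal timelike pair is
obtained from `(e₀, e_d)` by an element of `G₀`. -/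
lemma exists_G0_pair (hd : 1 ≤ d) {a b : Fin (d+1) → ℝ}
    (haa : formR d a a = 1) (hbb : formR d b b = 1) (hab : formR d a b = 0)
    (hpos : 0 < a 0 * b (Fin.last d) - a (Fin.last d) * b 0) :
    ∃ Λ ∈ G0 d, Λ.mulVec (Pi.single 0 1 : Fin (d+1) → ℝ) = a ∧
      Λ.mulVec (Pi.single (Fin.last d) 1 : Fin (d+1) → ℝ) = b := by
  have h0l := zero_ne_last hd
  obtain ⟨g1, hg1, ha1l, ha10⟩ := rotate_step hd haa
  have hg1' := G0_subset_Ggrp hg1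
  obtain ⟨g2, hg2, ha2, -⟩ := reduce_step hd (Or.inl rfl) (Or.inr rfl) h0l
    (by rw [hg1' a a, haa]) ha1l ha10
  set h := g2 * g1 with hh
  have hhG0 : h ∈ G0 d := G0_mul hg2 hg1
  have hhG := G0_subset_Ggrp hhG0
  have hha : h.mulVec a = Pi.single 0 1 := by
    rw [hh, ← Matrix.mulVec_mulVec]
    exact ha2
  set b2 := h.mulVec b with hb2
  have hb20 : b2 0 = 0 := by
    have := hhG a b
    rw [hab, hha, formR_single_left, eta_zero, one_mul] at this
    exact this
  have hb2l : 0 < b2 (Fin.last d) := by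
    have := D_pos_G0 hd haa hbb hab hpos hhG0
    rw [hha, Pi.single_eq_same, Pi.single_apply, if_neg (Ne.symm h0l)] at this
    simpa using this
  obtain ⟨g3, hg3, hb3, hfix⟩ := reduce_step hd (Or.inr rfl) (Or.inl rfl) (Ne.symm h0l)
    (by rw [hhG b b, hbb]) hb20 hb2l
  set g := g3 * h with hg
  have hgG0 : g ∈ G0 d := G0_mul hg3 hhG0
  have hga : g.mulVec a = Pi.single 0 1 := by
    rw [hg, ← Matrix.mulVec_mulVec, hha, hfix]
  have hgb : g.mulVec b = Pi.single (Fin.last d) 1 := by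
    rw [hg, ← Matrix.mulVec_mulVec, ← hb2, hb3]
  refine ⟨ginv d g, G0_ginv hgG0, ?_, ?_⟩
  · rw [← hga, Matrix.mulVec_mulVec, ginv_mul (G0_subset_Ggrp hgG0), Matrix.one_mulVec]
  · rw [← hgb, Matrix.mulVec_mulVec, ginv_mul (G0_subset_Ggrp hgG0), Matrix.one_mulVec]

end Construct

section Final
variable {d : ℕ}

lemma base_e00 (hd : 1 ≤ d) : formR d (Pi.single 0 1) (Pi.single 0 1) = 1 := by
  rw [formR_single_left, eta_zero, one_mul]; exact Pi.single_eq_same 0 1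

lemma base_ell (hd : 1 ≤ d) :
    formR d (Pi.single (Fin.last d) 1) (Pi.single (Fin.last d) (1:ℝ)) = 1 := by
  rw [formR_single_left, eta_last, one_mul]; exact Pi.single_eq_same _ 1

lemma base_e0l (hd : 1 ≤ d) : formR d (Pi.single 0 1) (Pi.single (Fin.last d) (1:ℝ)) = 0 := by
  rw [formR_single_left, eta_zero, one_mul, Pi.single_apply, if_neg (zero_ne_last hd)]

lemma conj_M0d (hd : 1 ≤ d) {Λ : Matrix (Fin (d+1)) (Fin (d+1)) ℝ} (hΛ : Λ ∈ Ggrp d) :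
    Λ * M0d d
      = ell d (Λ.mulVec (Pi.single 0 1)) (Λ.mulVec (Pi.single (Fin.last d) 1)) * Λ := by
  have h0l := zero_ne_last hd
  set a := Λ.mulVec (Pi.single 0 1 : Fin (d+1) → ℝ) with ha
  set b := Λ.mulVec (Pi.single (Fin.last d) 1 : Fin (d+1) → ℝ) with hb
  apply Matrix.ext
  intro i k
  have hdelta : ∀ (m : Fin (d+1)), ∑ j, Λ i j * (Pi.single m 1 : Fin (d+1) → ℝ) j = Λ i m := by
    intro m
    rw [Finset.sum_eq_single m]
    · rw [Pi.single_eq_same, mul_one]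
    · intro j _ hj; rw [Pi.single_eq_of_ne hj, mul_zero]
    · intro h; exact absurd (Finset.mem_univ m) h
  have hai : a i = Λ i 0 := by rw [ha, Matrix.mulVec_single]; exact mul_one _
  have hbi : b i = Λ i (Fin.last d) := by rw [hb, Matrix.mulVec_single]; exact mul_one _
  have hcol : ∀ (x : Fin (d+1) → ℝ), ∑ j, eta d j * x j * Λ j k
      = formR d x (Λ.mulVec (Pi.single k 1)) := by
    intro x
    unfold formR
    apply Finset.sum_congr rfl
    intro j _
    simp [Matrix.mulVec_single]
  have hLHS : (Λ * M0d d) i k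
      = (eta d k * (Pi.single (Fin.last d) 1 : Fin (d+1) → ℝ) k) * Λ i 0
        - (eta d k * (Pi.single 0 1 : Fin (d+1) → ℝ) k) * Λ i (Fin.last d) := by
    show ∑ j, Λ i j * M0d d j k = _
    rw [Finset.sum_congr rfl (fun j _ => show Λ i j * M0d d j k
      = (eta d k * (Pi.single (Fin.last d) 1 : Fin (d+1) → ℝ) k) * (Λ i j * (Pi.single 0 1 : Fin (d+1) → ℝ) j)
        - (eta d k * (Pi.single 0 1 : Fin (d+1) → ℝ) k) * (Λ i j * (Pi.single (Fin.last d) 1 : Fin (d+1) → ℝ) j) from by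
        unfold M0d ell; simp only [Matrix.of_apply]; ring)]
    rw [Finset.sum_sub_distrib, ← Finset.mul_sum, ← Finset.mul_sum, hdelta, hdelta]
  have hRHS : (ell d a b * Λ) i k
      = a i * formR d b (Λ.mulVec (Pi.single k 1))
        - b i * formR d a (Λ.mulVec (Pi.single k 1)) := by
    show ∑ j, ell d a b i j * Λ j k = _
    rw [Finset.sum_congr rfl (fun j _ => show ell d a b i j * Λ j k
      = a i * (eta d j * b j * Λ j k) - b i * (eta d j * a j * Λ j k) from by
        unfold ell; simp only [Matrix.of_apply]; ring)]
    rw [Finset.sum_sub_distrib, ← Finset.mul_sum, ← Finset.mul_sum, hcol, hcol]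
  have hfb : formR d b (Λ.mulVec (Pi.single k 1)) = (Pi.single k 1 : Fin (d+1) → ℝ) (Fin.last d) := by
    rw [hb, hΛ, formR_single_left, eta_last, one_mul]
  have hfa : formR d a (Λ.mulVec (Pi.single k 1)) = (Pi.single k 1 : Fin (d+1) → ℝ) 0 := by
    rw [ha, hΛ, formR_single_left, eta_zero, one_mul]
  rw [hLHS, hRHS, hfa, hfb, hai, hbi]
  by_cases hk0 : k = 0
  · subst hk0
    simp [Pi.single_apply, h0l, Ne.symm h0l, eta_zero]
  · by_cases hkl : k = Fin.last d
    · subst hkl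
      simp [Pi.single_apply, h0l, Ne.symm h0l, eta_last]
    · simp [Pi.single_apply, hk0, hkl, Ne.symm hk0, Ne.symm hkl]

lemma conj_in_G0 (hd : 1 ≤ d) {Λ : Matrix (Fin (d+1)) (Fin (d+1)) ℝ} (hΛ : Λ ∈ G0 d) :
    Λ * M0d d * Λ⁻¹
      = ell d (Λ.mulVec (Pi.single 0 1)) (Λ.mulVec (Pi.single (Fin.last d) 1)) := by
  have hG := G0_subset_Ggrp hΛ
  rw [conj_M0d hd hG, inv_eq_ginv hG, Matrix.mul_assoc, mul_ginv hG, Matrix.mul_one]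

lemma D_pos_of_G0 (hd : 1 ≤ d) {Λ : Matrix (Fin (d+1)) (Fin (d+1)) ℝ} (hΛ : Λ ∈ G0 d) :
    0 < (Λ.mulVec (Pi.single 0 1)) 0 * (Λ.mulVec (Pi.single (Fin.last d) 1)) (Fin.last d)
      - (Λ.mulVec (Pi.single 0 1)) (Fin.last d) * (Λ.mulVec (Pi.single (Fin.last d) 1)) 0 := by
  refine D_pos_G0 hd (base_e00 hd) (base_ell hd) (base_e0l hd) ?_ hΛ
  rw [Pi.single_eq_same, Pi.single_eq_same, Pi.single_apply,
    if_neg (Ne.symm (zero_ne_last hd)), Pi.single_apply, if_neg (zero_ne_last hd)]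
  norm_num

end Final

/-- an orthonormal timelike pair `(a,b)` is of the form `(Λe₀, Λe_d)` with
`Λ ∈ G₀` iff `a⁰b^d − a^d b⁰ > 0`; consequently `C₁ = {Λ M₀d Λ⁻¹ : Λ ∈ G₀}`. -/
theorem orthonormal_pair_characterization
    (d : ℕ) (hd : 2 ≤ d) (a b : Fin (d+1) → ℝ)
    (haa : formR d a a = 1) (hbb : formR d b b = 1) (habf : formR d a b = 0) :
    ((∃ Λ ∈ G0 d, Λ.mulVec (Pi.single 0 1 : Fin (d+1) → ℝ) = a ∧
        Λ.mulVec (Pi.single (Fin.last d) 1 : Fin (d+1) → ℝ) = b) ↔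
      0 < a 0 * b (Fin.last d) - a (Fin.last d) * b 0) ∧
    C1 d = {M | ∃ Λ ∈ G0 d, M = Λ * M0d d * Λ⁻¹} := by
  have hd1 : 1 ≤ d := le_trans (by norm_num) hd
  constructor
  · constructor
    · rintro ⟨Λ, hΛ, rfl, rfl⟩
      exact D_pos_of_G0 hd1 hΛ
    · intro hpos
      exact exists_G0_pair hd1 haa hbb habf hpos
  · ext M
    constructor
    · rintro ⟨a', b', ha', hb', hab', hpos', rfl⟩
      obtain ⟨Λ, hΛ, hΛ0, hΛl⟩ := exists_G0_pair hd1 ha' hb' hab' hpos'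
      refine ⟨Λ, hΛ, ?_⟩
      rw [conj_in_G0 hd1 hΛ, hΛ0, hΛl]
    · rintro ⟨Λ, hΛ, rfl⟩
      have hG := G0_subset_Ggrp hΛ
      refine ⟨Λ.mulVec (Pi.single 0 1), Λ.mulVec (Pi.single (Fin.last d) 1),
        ?_, ?_, ?_, D_pos_of_G0 hd1 hΛ, conj_in_G0 hd1 hΛ⟩
      · rw [hG, base_e00 hd1]
      · rw [hG, base_ell hd1]
      · rw [hG, base_e0l hd1]

end AdS
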